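/- Let n ≥ 1 and let I, J be n-element subsets of [2n]. Then I is weakly separated from J if and only if Ī is weakly separated from J̄. -/
import Mathlib


open Finset

/-- Position of `x` in the cyclic order on `[m] = {1,…,m}` starting at `a`:
`a` has position `0`, `a+1` position `1`, …, `a-1` position `m-1`. -/
def cpos (m a x : ℕ) : ℕ := (x + m - a) % m

/-- The strict cyclic order `x <_a y` on `[m]`. -/
def clt (m a x y : ℕ) : Prop := cpos m a x < cpos m a y

instance (m a x y : ℕ) : Decidable (clt m a x y) :=
  inferInstanceAs (Decidable (_ < _))

/-- `I` and `J` are weakly separated as subsets of `[m]`: there do not exist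
`c ∈ [m]` and `x₁ <_c x₂ <_c x₃ <_c x₄` with `x₁, x₃ ∈ I∖J` and `x₂, x₄ ∈ J∖I`. -/
def WSep (m : ℕ) (I J : Finset ℕ) : Prop :=
  ¬ ∃ c x₁ x₂ x₃ x₄ : ℕ, c ∈ Finset.Icc 1 m ∧
      x₁ ∈ I \ J ∧ x₃ ∈ I \ J ∧ x₂ ∈ J \ I ∧ x₄ ∈ J \ I ∧
      clt m c x₁ x₂ ∧ clt m c x₂ x₃ ∧ clt m c x₃ x₄

/-- A weakly separated collection of `k`-element subsets of `[m]`. -/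
def IsWSColl (m k : ℕ) (C : Finset (Finset ℕ)) : Prop :=
  (∀ I ∈ C, I ⊆ Finset.Icc 1 m ∧ I.card = k) ∧
    ∀ I ∈ C, ∀ J ∈ C, WSep m I J

/-- `Ī := [2n] ∖ {i' : i ∈ I}` where `i' = 2n+1-i`. -/
def bar (n : ℕ) (I : Finset ℕ) : Finset ℕ :=
  Finset.Icc 1 (2 * n) \ I.image fun i => 2 * n + 1 - i

/-- A collection is symmetric if it is closed under `I ↦ Ī`. -/
def IsSym (n : ℕ) (C : Finset (Finset ℕ)) : Prop := ∀ I ∈ C, bar n I ∈ C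

/-- `I` has a full pair at `{a, a'}`. -/
def FullPair (n : ℕ) (I : Finset ℕ) (a : ℕ) : Prop := a ∈ I ∧ 2 * n + 1 - a ∈ I

/-- `I` has an empty pair at `{a, a'}`. -/
def EmptyPair (n : ℕ) (I : Finset ℕ) (a : ℕ) : Prop := a ∉ I ∧ 2 * n + 1 - a ∉ I

instance (n : ℕ) (I : Finset ℕ) (a : ℕ) : Decidable (FullPair n I a) :=
  inferInstanceAs (Decidable (_ ∈ I ∧ _ ∈ I))

instance (n : ℕ) (I : Finset ℕ) (a : ℕ) : Decidable (EmptyPair n I a) :=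
  inferInstanceAs (Decidable (_ ∉ I ∧ _ ∉ I))

/-- `I` is pair-free: it has no full pair. -/
def PairFree (n : ℕ) (I : Finset ℕ) : Prop :=
  ∀ a ∈ Finset.Icc 1 n, ¬ FullPair n I a

instance (n : ℕ) (I : Finset ℕ) : Decidable (PairFree n I) :=
  inferInstanceAs (Decidable (∀ a ∈ Finset.Icc 1 n, ¬ FullPair n I a))

/-- `I` is admissible: `I` and `Ī` are weakly separated. -/
def Admissible (n : ℕ) (I : Finset ℕ) : Prop := WSep (2 * n) I (bar n I)

/-- `I` is left-handed: admissible, has at least one full pair, and every full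
pair of `I` is above every empty pair of `I`. -/
def LeftHanded (n : ℕ) (I : Finset ℕ) : Prop :=
  Admissible n I ∧ (∃ a ∈ Finset.Icc 1 n, FullPair n I a) ∧
    ∀ a ∈ Finset.Icc 1 n, ∀ b ∈ Finset.Icc 1 n,
      FullPair n I a → EmptyPair n I b → a < b

lemma cpos_eq (m c x : ℕ) (hc : 1 ≤ c) (hc' : c ≤ m) (hx : 1 ≤ x) (hx' : x ≤ m) :
    cpos m c x = if c ≤ x then x - c else x + m - c := by
  unfold cpos
  split_ifs with h
  · have h1 : x + m - c = m + (x - c) := by omega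
    rw [h1, Nat.add_mod_left, Nat.mod_eq_of_lt (by omega)]
  · exact Nat.mod_eq_of_lt (by omega)

lemma clt_reflect (m c x y : ℕ) (hm : 1 ≤ m) (hc : 1 ≤ c) (hc' : c ≤ m)
    (hx : 1 ≤ x) (hx' : x ≤ m) (hy : 1 ≤ y) (hy' : y ≤ m)
    (h : clt m c x y) : clt m ((m + 1 - c) % m + 1) (m + 1 - y) (m + 1 - x) := by
  set b := (m + 1 - c) % m + 1 with hb
  have hbval : (c = 1 ∧ b = 1) ∨ (2 ≤ c ∧ b = m + 2 - c) := by
    rcases Nat.eq_or_lt_of_le hc with h1 | h1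
    · left
      refine ⟨h1.symm, ?_⟩
      rw [hb, ← h1]
      simp
    · right
      refine ⟨h1, ?_⟩
      rw [hb, Nat.mod_eq_of_lt (by omega)]
      omega
  have hb1 : 1 ≤ b := by omega
  have hb2 : b ≤ m := by omega
  have e1 := cpos_eq m c x hc hc' hx hx'
  have e2 := cpos_eq m c y hc hc' hy hy'
  have e3 := cpos_eq m b (m + 1 - x) hb1 hb2 (by omega) (by omega)
  have e4 := cpos_eq m b (m + 1 - y) hb1 hb2 (by omega) (by omega)
  unfold clt at h ⊢
  rw [e1, e2] at h
  rw [e3, e4]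
  split_ifs at h ⊢ <;> omega

lemma mem_bar_iff (n : ℕ) (I : Finset ℕ) (hI : I ⊆ Finset.Icc 1 (2 * n)) (x : ℕ) :
    x ∈ bar n I ↔ x ∈ Finset.Icc 1 (2 * n) ∧ 2 * n + 1 - x ∉ I := by
  unfold bar
  rw [mem_sdiff, mem_image]
  constructor
  · rintro ⟨hx, hni⟩
    simp only [mem_Icc] at hx
    refine ⟨by simp [mem_Icc]; omega, fun hmem => hni ⟨2 * n + 1 - x, hmem, by omega⟩⟩
  · rintro ⟨hx, hni⟩
    simp only [mem_Icc] at hx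
    refine ⟨by simp [mem_Icc]; omega, ?_⟩
    rintro ⟨i, hi, rfl⟩
    have := hI hi
    simp only [mem_Icc] at this
    have : i = 2 * n + 1 - (2 * n + 1 - i) := by omega
    exact hni (this ▸ hi)

lemma bar_bar (n : ℕ) (I : Finset ℕ) (hI : I ⊆ Finset.Icc 1 (2 * n)) :
    bar n (bar n I) = I := by
  ext x
  have hbsub : bar n I ⊆ Finset.Icc 1 (2 * n) := sdiff_subset
  rw [mem_bar_iff n (bar n I) hbsub, mem_bar_iff n I hI]
  constructor
  · rintro ⟨hx, h⟩
    simp only [mem_Icc] at hx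
    push_neg at h
    have h2 : 2 * n + 1 - (2 * n + 1 - x) = x := by omega
    have := h (by simp [mem_Icc]; omega)
    rw [h2] at this
    simpa using this
  · intro hx
    have hx' := hI hx
    simp only [mem_Icc] at hx'
    refine ⟨by simp [mem_Icc]; omega, ?_⟩
    intro hmem
    have h2 : 2 * n + 1 - (2 * n + 1 - x) = x := by omega
    rw [h2] at hmem
    exact hmem.2 hx

lemma not_wsep_bar (n : ℕ) (hn : 1 ≤ n) (I J : Finset ℕ)
    (hI : I ⊆ Finset.Icc 1 (2 * n)) (hJ : J ⊆ Finset.Icc 1 (2 * n))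
    (h : ¬ WSep (2 * n) I J) : ¬ WSep (2 * n) (bar n I) (bar n J) := by
  unfold WSep at h ⊢
  push_neg at h ⊢
  obtain ⟨c, x₁, x₂, x₃, x₄, hc, h1, h3, h2, h4, o12, o23, o34⟩ := h
  simp only [mem_Icc] at hc
  set m := 2 * n with hm
  have hmem : ∀ x ∈ I \ J, 1 ≤ x ∧ x ≤ m := by
    intro x hx
    have := hI (mem_sdiff.mp hx).1
    simp only [mem_Icc] at this; exact this
  have hmem' : ∀ x ∈ J \ I, 1 ≤ x ∧ x ≤ m := by
    intro x hx
    have := hJ (mem_sdiff.mp hx).1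
    simp only [mem_Icc] at this; exact this
  obtain ⟨h1a, h1b⟩ := hmem _ h1
  obtain ⟨h3a, h3b⟩ := hmem _ h3
  obtain ⟨h2a, h2b⟩ := hmem' _ h2
  obtain ⟨h4a, h4b⟩ := hmem' _ h4
  have hm1 : 1 ≤ m := by omega
  -- membership transfer: for x ∈ [1,m], σx ∈ bar I \ bar J ↔ x ∈ J \ I etc.
  have key : ∀ x : ℕ, 1 ≤ x → x ≤ m → (x ∈ J \ I → (m + 1 - x) ∈ bar n I \ bar n J) ∧
      (x ∈ I \ J → (m + 1 - x) ∈ bar n J \ bar n I) := by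
    intro x hx1 hx2
    have hσ : 2 * n + 1 - (m + 1 - x) = x := by omega
    constructor
    · intro hx
      rw [mem_sdiff] at hx ⊢
      rw [mem_bar_iff n I hI, mem_bar_iff n J hJ, hσ]
      simp only [mem_Icc]
      exact ⟨⟨by omega, hx.2⟩, fun hh => hh.2 hx.1⟩
    · intro hx
      rw [mem_sdiff] at hx ⊢
      rw [mem_bar_iff n I hI, mem_bar_iff n J hJ, hσ]
      simp only [mem_Icc]
      exact ⟨⟨by omega, hx.2⟩, fun hh => hh.2 hx.1⟩
  have hmod : (m + 1 - c) % m < m := Nat.mod_lt _ (by omega)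
  refine ⟨(m + 1 - c) % m + 1, m + 1 - x₄, m + 1 - x₃, m + 1 - x₂, m + 1 - x₁,
    by simp [mem_Icc]; omega, ?_, ?_, ?_, ?_, ?_, ?_, ?_⟩
  · exact ((key x₄ h4a h4b).1 h4)
  · exact ((key x₂ h2a h2b).1 h2)
  · exact ((key x₃ h3a h3b).2 h3)
  · exact ((key x₁ h1a h1b).2 h1)
  · exact clt_reflect m c x₃ x₄ hm1 hc.1 hc.2 h3a h3b h4a h4b o34
  · exact clt_reflect m c x₂ x₃ hm1 hc.1 hc.2 h2a h2b h3a h3b o23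
  · exact clt_reflect m c x₁ x₂ hm1 hc.1 hc.2 h1a h1b h2a h2b o12


/-- `I` is weakly separated from `J` iff `Ī` is weakly separated
from `J̄`. -/
theorem statement7 (n : ℕ) (hn : 1 ≤ n) (I J : Finset ℕ)
    (hI : I ⊆ Finset.Icc 1 (2 * n)) (hIcard : I.card = n)
    (hJ : J ⊆ Finset.Icc 1 (2 * n)) (hJcard : J.card = n) :
    WSep (2 * n) I J ↔ WSep (2 * n) (bar n I) (bar n J) := by
  have hbI : bar n I ⊆ Finset.Icc 1 (2 * n) := sdiff_subset
  have hbJ : bar n J ⊆ Finset.Icc 1 (2 * n) := sdiff_subset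
  constructor
  · intro h
    by_contra hh
    have := not_wsep_bar n hn (bar n I) (bar n J) hbI hbJ hh
    rw [bar_bar n I hI, bar_bar n J hJ] at this
    exact this h
  · intro h
    by_contra hh
    exact (not_wsep_bar n hn I J hI hJ hh) h
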